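/- Analytic core of the weight-variance optimality theorem: let q_1,…,q_N : ℝ^d → (0,∞) be strictly positive probability density functions, let f_1,…,f_N : ℝ^d → [0,∞) be measurable, and set p_mix := (1/N)·Σ_{i=1}^N f_i and q_mix := (1/N)·Σ_{i=1}^N q_i. Then Σ_{i=1}^N ∫ (p_mix/q_mix)²·q_i dx ≤ Σ_{i=1}^N ∫ (f_i²/q_i) dx, with both sides taking values in [0, +∞]. Equivalently, N·∫ (p_mix²/q_mix) dx ≤ Σ_{i=1}^N ∫ (f_i²/q_i) dx. -/

import Mathlib

open MeasureTheory

/-- Analytic core of the weight-variance optimality theorem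
(integrated Titu's lemma): for strictly positive probability densities `q_i`
and nonnegative measurable `f_i`, with `p_mix = (1/N)·Σ f_i` and
`q_mix = (1/N)·Σ q_i`,
`Σ_i ∫ (p_mix/q_mix)²·q_i ≤ Σ_i ∫ f_i²/q_i` in `[0, +∞]`. -/
theorem mixture_weight_variance_optimality
    {d N : ℕ} (hN : 1 ≤ N)
    (q f : Fin N → (Fin d → ℝ) → ℝ)
    (hq_pos : ∀ i x, 0 < q i x)
    (hq_meas : ∀ i, Measurable (q i))
    (hq_prob : ∀ i, ∫ x, q i x = 1)
    (hf_nonneg : ∀ i x, 0 ≤ f i x)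
    (hf_meas : ∀ i, Measurable (f i))
    (pmix qmix : (Fin d → ℝ) → ℝ)
    (hpmix : ∀ x, pmix x = (N : ℝ)⁻¹ * ∑ i, f i x)
    (hqmix : ∀ x, qmix x = (N : ℝ)⁻¹ * ∑ i, q i x) :
    ∑ i, ∫⁻ x, ENNReal.ofReal ((pmix x / qmix x) ^ 2 * q i x) ≤
      ∑ i, ∫⁻ x, ENNReal.ofReal ((f i x) ^ 2 / q i x) := by
  have hpm : Measurable pmix := by
    have : pmix = fun x => (N : ℝ)⁻¹ * ∑ i, f i x := funext hpmix
    rw [this]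
    exact measurable_const.mul (Finset.measurable_sum _ fun i _ => hf_meas i)
  have hqm : Measurable qmix := by
    have : qmix = fun x => (N : ℝ)⁻¹ * ∑ i, q i x := funext hqmix
    rw [this]
    exact measurable_const.mul (Finset.measurable_sum _ fun i _ => hq_meas i)
  rw [← lintegral_finset_sum _ (fun i _ =>
        (show Measurable (fun x => ENNReal.ofReal ((pmix x / qmix x) ^ 2 * q i x)) from
          (((hpm.div hqm).pow_const 2).mul (hq_meas i)).ennreal_ofReal)),
      ← lintegral_finset_sum _ (fun i _ =>
        (show Measurable (fun x => ENNReal.ofReal ((f i x) ^ 2 / q i x)) from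
          (((hf_meas i).pow_const 2).div (hq_meas i)).ennreal_ofReal))]
  refine lintegral_mono fun x => ?_
  rw [← ENNReal.ofReal_sum_of_nonneg (fun i _ =>
        mul_nonneg (sq_nonneg _) (hq_pos i x).le),
      ← ENNReal.ofReal_sum_of_nonneg (fun i _ =>
        div_nonneg (sq_nonneg _) (hq_pos i x).le)]
  refine ENNReal.ofReal_le_ofReal ?_
  have hS : 0 < ∑ i, q i x := by
    exact Finset.sum_pos (fun i _ => hq_pos i x) ⟨⟨0, hN⟩, Finset.mem_univ _⟩
  have hNpos : (0 : ℝ) < (N : ℝ)⁻¹ := by positivity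
  have hdiv : pmix x / qmix x = (∑ i, f i x) / (∑ i, q i x) := by
    rw [hpmix, hqmix, mul_div_mul_left _ _ hNpos.ne']
  rw [← Finset.mul_sum, hdiv]
  calc ((∑ i, f i x) / (∑ i, q i x)) ^ 2 * (∑ i, q i x)
      = (∑ i, f i x) ^ 2 / (∑ i, q i x) := by field_simp
    _ ≤ ∑ i, f i x ^ 2 / q i x :=
        Finset.sq_sum_div_le_sum_sq_div _ _ (fun i _ => hq_pos i x)
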